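/- Let G be a locally compact unimodular group, (π, H) a square-integrable unitary representation with formal dimension d_π, a ∈ L^∞(G), and S a trace-class operator on H. Then the weak integral a ∗ S = ∫_G a(g) π(g) S π(g)⁻¹ dμ_G(g) defines a bounded operator with ‖a ∗ S‖ ≤ (1/d_π)·‖a‖_∞·‖S‖₁. -/

import Mathlib

open MeasureTheory ComplexConjugate
open scoped InnerProductSpace
open scoped ENNReal NNReal

/-- let `G` be a locally compact unimodular group, `(π, H)` a square-integrable
unitary representation with formal dimension `d_π` (characterized by
`∫_G |⟨v, π(g)w⟩|² dμ(g) = (1/d_π)‖v‖²‖w‖²`), `a ∈ L^∞(G)` with `‖a‖_∞ ≤ M`, and `S` a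
trace-class operator on `H` given by the rank-one decomposition `S = ∑ᵢ fᵢ ⊗ h̄ᵢ` with trace
norm `‖S‖₁ = ∑ᵢ ‖fᵢ‖‖hᵢ‖`. Then the weak integral `a ∗ S = ∫_G a(g) π(g) S π(g)⁻¹ dμ(g)`
defines a bounded operator with `‖a ∗ S‖ ≤ (1/d_π)·‖a‖_∞·‖S‖₁`. -/
theorem conv_bounded_function_trace_class_norm_bound
    {G : Type*} [Group G] [TopologicalSpace G] [IsTopologicalGroup G] [LocallyCompactSpace G]
    [MeasurableSpace G] [BorelSpace G]
    (μ : Measure G) [μ.IsHaarMeasure] [μ.IsMulRightInvariant]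
    {H : Type*} [NormedAddCommGroup H] [InnerProductSpace ℂ H] [CompleteSpace H]
    (π : G →* (H →L[ℂ] H))
    (hπ : ∀ (g : G) (u v : H), ⟪π g u, π g v⟫_ℂ = ⟪u, v⟫_ℂ)
    (d : ℝ) (hd : 0 < d)
    (hsq : ∀ v w : H, ∫ g, ‖⟪π g w, v⟫_ℂ‖ ^ 2 ∂μ = (1 / d) * ‖v‖ ^ 2 * ‖w‖ ^ 2)
    (a : G → ℂ) (M : ℝ) (hM : ∀ g : G, ‖a g‖ ≤ M)
    (S : H →L[ℂ] H) (f h : ℕ → H)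
    (hS : ∀ u : H, S u = ∑' i : ℕ, ⟪h i, u⟫_ℂ • f i)
    (hsum : Summable fun i : ℕ => ‖f i‖ * ‖h i‖)
    (T : H →L[ℂ] H)
    (hT : ∀ u v : H, ⟪T u, v⟫_ℂ = ∫ g, a g * ⟪π g (S (π g⁻¹ u)), v⟫_ℂ ∂μ) :
    ‖T‖ ≤ (1 / d) * M * ∑' i : ℕ, ‖f i‖ * ‖h i‖ := by
  classical
  have hM0 : 0 ≤ M := (norm_nonneg _).trans (hM 1)
  have hsum0 : 0 ≤ ∑' i : ℕ, ‖f i‖ * ‖h i‖ :=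
    tsum_nonneg fun i => by positivity
  -- norms are preserved
  have hnorm : ∀ (g : G) (x : H), ‖π g x‖ = ‖x‖ := by
    intro g x
    have h1 : ‖π g x‖ ^ 2 = ‖x‖ ^ 2 := by
      rw [← inner_self_eq_norm_sq (𝕜 := ℂ) (π g x), hπ, inner_self_eq_norm_sq]
    calc ‖π g x‖ = Real.sqrt (‖π g x‖ ^ 2) := (Real.sqrt_sq (norm_nonneg _)).symm
      _ = Real.sqrt (‖x‖ ^ 2) := by rw [h1]
      _ = ‖x‖ := Real.sqrt_sq (norm_nonneg _)
  have hπinv : ∀ (g : G) (u : H), π g (π g⁻¹ u) = u := by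
    intro g u
    have : π g * π g⁻¹ = 1 := by rw [← map_mul, mul_inv_cancel, map_one]
    calc π g (π g⁻¹ u) = (π g * π g⁻¹) u := rfl
      _ = u := by rw [this]; rfl
  have hshift : ∀ (g : G) (w u : H), ⟪w, π g⁻¹ u⟫_ℂ = ⟪π g w, u⟫_ℂ := by
    intro g w u
    conv_rhs => rw [← hπinv g u]
    rw [hπ]
  -- integrability of squared inner products
  have hInt : ∀ w x : H, w ≠ 0 → x ≠ 0 →
      Integrable (fun g => ‖⟪π g w, x⟫_ℂ‖ ^ 2) μ := by
    intro w x hw hx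
    by_contra hc
    have h0 := integral_undef hc
    rw [hsq x w] at h0
    have hx' : 0 < ‖x‖ := norm_pos_iff.mpr hx
    have hw' : 0 < ‖w‖ := norm_pos_iff.mpr hw
    have : 0 < (1 / d) * ‖x‖ ^ 2 * ‖w‖ ^ 2 := by positivity
    rw [h0] at this
    exact lt_irrefl 0 this
  -- a.e.-measurability of the inner products
  have hmeas : ∀ w x : H, AEMeasurable (fun g => ENNReal.ofReal ‖⟪π g w, x⟫_ℂ‖) μ := by
    intro w x
    rcases eq_or_ne w 0 with rfl | hw
    · simpa using aemeasurable_const (μ := μ) (b := ENNReal.ofReal ‖(0 : ℂ)‖)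
    rcases eq_or_ne x 0 with rfl | hx
    · simpa using aemeasurable_const (μ := μ) (b := ENNReal.ofReal ‖(0 : ℂ)‖)
    have h1 : AEMeasurable (fun g => ‖⟪π g w, x⟫_ℂ‖ ^ 2) μ :=
      (hInt w x hw hx).aestronglyMeasurable.aemeasurable
    have h2 : AEMeasurable (fun g => ‖⟪π g w, x⟫_ℂ‖) μ := by
      have h3 := Real.continuous_sqrt.measurable.comp_aemeasurable h1
      have : (fun g => Real.sqrt (‖⟪π g w, x⟫_ℂ‖ ^ 2)) = fun g => ‖⟪π g w, x⟫_ℂ‖ := by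
        funext g; exact Real.sqrt_sq (norm_nonneg _)
      exact this ▸ h3
    exact ENNReal.measurable_ofReal.comp_aemeasurable h2
  -- the lintegral bound from square-integrability
  have hsqE : ∀ w x : H,
      ∫⁻ g, (ENNReal.ofReal ‖⟪π g w, x⟫_ℂ‖) ^ 2 ∂μ
        ≤ ENNReal.ofReal ((1 / d) * ‖x‖ ^ 2 * ‖w‖ ^ 2) := by
    intro w x
    rcases eq_or_ne w 0 with rfl | hw
    · simp
    rcases eq_or_ne x 0 with rfl | hx
    · simp
    have hi := hInt w x hw hx
    have key : ENNReal.ofReal (∫ g, ‖⟪π g w, x⟫_ℂ‖ ^ 2 ∂μ)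
        = ∫⁻ g, ENNReal.ofReal (‖⟪π g w, x⟫_ℂ‖ ^ 2) ∂μ :=
      ofReal_integral_eq_lintegral_ofReal hi (Filter.Eventually.of_forall fun g => by positivity)
    calc ∫⁻ g, (ENNReal.ofReal ‖⟪π g w, x⟫_ℂ‖) ^ 2 ∂μ
        = ∫⁻ g, ENNReal.ofReal (‖⟪π g w, x⟫_ℂ‖ ^ 2) ∂μ := by
          simp_rw [ENNReal.ofReal_pow (norm_nonneg _)]
      _ = ENNReal.ofReal ((1 / d) * ‖x‖ ^ 2 * ‖w‖ ^ 2) := by rw [← key, hsq]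
      _ ≤ ENNReal.ofReal ((1 / d) * ‖x‖ ^ 2 * ‖w‖ ^ 2) := le_rfl
  -- summability of coefficient products
  have hsn : ∀ (g : G) (u v : H),
      Summable (fun i : ℕ => ‖⟪π g (h i), u⟫_ℂ‖ * ‖⟪π g (f i), v⟫_ℂ‖) := by
    intro g u v
    apply Summable.of_nonneg_of_le (fun i => by positivity) (fun i => ?_)
      (hsum.mul_right (‖u‖ * ‖v‖))
    calc ‖⟪π g (h i), u⟫_ℂ‖ * ‖⟪π g (f i), v⟫_ℂ‖
        ≤ (‖π g (h i)‖ * ‖u‖) * (‖π g (f i)‖ * ‖v‖) := by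
          apply mul_le_mul (norm_inner_le_norm _ _) (norm_inner_le_norm _ _)
            (norm_nonneg _) (by positivity)
      _ = ‖f i‖ * ‖h i‖ * (‖u‖ * ‖v‖) := by rw [hnorm, hnorm]; ring
  -- expansion of the matrix coefficient
  have hexp : ∀ (g : G) (u v : H),
      ⟪π g (S (π g⁻¹ u)), v⟫_ℂ
        = ∑' i : ℕ, conj (⟪π g (h i), u⟫_ℂ) * ⟪π g (f i), v⟫_ℂ := by
    intro g u v
    have hsumm : Summable (fun i : ℕ => ⟪h i, π g⁻¹ u⟫_ℂ • f i) := by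
      apply Summable.of_norm
      apply Summable.of_nonneg_of_le (fun i => norm_nonneg _) (fun i => ?_)
        (hsum.mul_right ‖π g⁻¹ u‖)
      rw [norm_smul]
      calc ‖⟪h i, π g⁻¹ u⟫_ℂ‖ * ‖f i‖ ≤ (‖h i‖ * ‖π g⁻¹ u‖) * ‖f i‖ := by
            gcongr
            exact norm_inner_le_norm _ _
        _ = ‖f i‖ * ‖h i‖ * ‖π g⁻¹ u‖ := by ring
    have hmap : π g (S (π g⁻¹ u)) = ∑' i : ℕ, ⟪π g (h i), u⟫_ℂ • π g (f i) := by
      rw [hS, ContinuousLinearMap.map_tsum _ hsumm]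
      exact tsum_congr fun i => by rw [_root_.map_smul, hshift]
    have hsumm2 : Summable (fun i : ℕ => ⟪π g (h i), u⟫_ℂ • π g (f i)) := by
      apply Summable.of_norm
      apply Summable.of_nonneg_of_le (fun i => norm_nonneg _) (fun i => ?_)
        (hsum.mul_right ‖u‖)
      rw [norm_smul, hnorm]
      calc ‖⟪π g (h i), u⟫_ℂ‖ * ‖f i‖ ≤ (‖π g (h i)‖ * ‖u‖) * ‖f i‖ := by
            gcongr
            exact norm_inner_le_norm _ _
        _ = ‖f i‖ * ‖h i‖ * ‖u‖ := by rw [hnorm]; ring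
    rw [hmap, ← inner_conj_symm]
    have : ⟪v, ∑' i : ℕ, ⟪π g (h i), u⟫_ℂ • π g (f i)⟫_ℂ
        = ∑' i : ℕ, ⟪π g (h i), u⟫_ℂ * ⟪v, π g (f i)⟫_ℂ := by
      have := (innerSL ℂ v).map_tsum hsumm2
      simpa [inner_smul_right] using this
    rw [this, starRingEnd_apply, tsum_star]
    refine tsum_congr fun i => ?_
    rw [← starRingEnd_apply, map_mul, inner_conj_symm, inner_conj_symm]
  -- pointwise bound
  have hpt : ∀ (g : G) (u v : H),
      ‖a g * ⟪π g (S (π g⁻¹ u)), v⟫_ℂ‖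
        ≤ M * ∑' i : ℕ, ‖⟪π g (h i), u⟫_ℂ‖ * ‖⟪π g (f i), v⟫_ℂ‖ := by
    intro g u v
    rw [norm_mul, hexp]
    have hb : ‖∑' i : ℕ, conj (⟪π g (h i), u⟫_ℂ) * ⟪π g (f i), v⟫_ℂ‖
        ≤ ∑' i : ℕ, ‖⟪π g (h i), u⟫_ℂ‖ * ‖⟪π g (f i), v⟫_ℂ‖ := by
      have h1 : Summable (fun i : ℕ => ‖conj (⟪π g (h i), u⟫_ℂ) * ⟪π g (f i), v⟫_ℂ‖) :=
        (hsn g u v).congr fun i => by rw [norm_mul, RCLike.norm_conj]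
      refine (norm_tsum_le_tsum_norm h1).trans (le_of_eq ?_)
      congr 1; funext i; rw [norm_mul, RCLike.norm_conj]
    exact mul_le_mul (hM g) hb (norm_nonneg _) hM0
  -- Hölder bound for each term
  have holder : ∀ (u v : H) (i : ℕ),
      ∫⁻ g, ENNReal.ofReal ‖⟪π g (h i), u⟫_ℂ‖ * ENNReal.ofReal ‖⟪π g (f i), v⟫_ℂ‖ ∂μ
        ≤ ENNReal.ofReal ((1 / d) * ‖u‖ * ‖v‖ * (‖f i‖ * ‖h i‖)) := by
    intro u v i
    have h2 : (2 : ℝ).HolderConjugate 2 := Real.holderConjugate_iff.mpr ⟨one_lt_two, by norm_num⟩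
    refine (ENNReal.lintegral_mul_le_Lp_mul_Lq μ h2 (hmeas (h i) u) (hmeas (f i) v)).trans ?_
    have e1 : ∫⁻ g, (ENNReal.ofReal ‖⟪π g (h i), u⟫_ℂ‖) ^ (2 : ℝ) ∂μ
        ≤ ENNReal.ofReal ((1 / d) * ‖u‖ ^ 2 * ‖h i‖ ^ 2) := by
      have : ∀ x : ℝ≥0∞, x ^ (2 : ℝ) = x ^ (2 : ℕ) := fun x => by
        rw [show ((2 : ℝ)) = ((2 : ℕ) : ℝ) by norm_num, ENNReal.rpow_natCast]
      simp_rw [this]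
      exact hsqE (h i) u
    have e2 : ∫⁻ g, (ENNReal.ofReal ‖⟪π g (f i), v⟫_ℂ‖) ^ (2 : ℝ) ∂μ
        ≤ ENNReal.ofReal ((1 / d) * ‖v‖ ^ 2 * ‖f i‖ ^ 2) := by
      have : ∀ x : ℝ≥0∞, x ^ (2 : ℝ) = x ^ (2 : ℕ) := fun x => by
        rw [show ((2 : ℝ)) = ((2 : ℕ) : ℝ) by norm_num, ENNReal.rpow_natCast]
      simp_rw [this]
      exact hsqE (f i) v
    calc (∫⁻ g, (ENNReal.ofReal ‖⟪π g (h i), u⟫_ℂ‖) ^ (2:ℝ) ∂μ) ^ (1/(2:ℝ))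
          * (∫⁻ g, (ENNReal.ofReal ‖⟪π g (f i), v⟫_ℂ‖) ^ (2:ℝ) ∂μ) ^ (1/(2:ℝ))
        ≤ (ENNReal.ofReal ((1 / d) * ‖u‖ ^ 2 * ‖h i‖ ^ 2)) ^ (1/(2:ℝ))
          * (ENNReal.ofReal ((1 / d) * ‖v‖ ^ 2 * ‖f i‖ ^ 2)) ^ (1/(2:ℝ)) := by
          exact mul_le_mul' (ENNReal.rpow_le_rpow e1 (by norm_num))
            (ENNReal.rpow_le_rpow e2 (by norm_num))
      _ = ENNReal.ofReal (((1 / d) * ‖u‖ ^ 2 * ‖h i‖ ^ 2) ^ (1/(2:ℝ)))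
          * ENNReal.ofReal (((1 / d) * ‖v‖ ^ 2 * ‖f i‖ ^ 2) ^ (1/(2:ℝ))) := by
          rw [ENNReal.ofReal_rpow_of_nonneg (by positivity) (by norm_num),
            ENNReal.ofReal_rpow_of_nonneg (by positivity) (by norm_num)]
      _ = ENNReal.ofReal ((1 / d) * ‖u‖ * ‖v‖ * (‖f i‖ * ‖h i‖)) := by
          rw [← ENNReal.ofReal_mul (by positivity)]
          congr 1
          rw [← Real.sqrt_eq_rpow, ← Real.sqrt_eq_rpow, ← Real.sqrt_mul (by positivity)]
          rw [show (1 / d) * ‖u‖ ^ 2 * ‖h i‖ ^ 2 * ((1 / d) * ‖v‖ ^ 2 * ‖f i‖ ^ 2)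
              = ((1 / d) * ‖u‖ * ‖v‖ * (‖f i‖ * ‖h i‖)) ^ 2 by ring]
          exact Real.sqrt_sq (by positivity)
  -- main estimate on matrix coefficients of T
  have key : ∀ u v : H, ‖⟪T u, v⟫_ℂ‖
      ≤ ((1 / d) * M * ∑' i : ℕ, ‖f i‖ * ‖h i‖) * ‖u‖ * ‖v‖ := by
    intro u v
    rw [hT]
    refine (norm_integral_le_lintegral_norm _).trans ?_
    have big : ∫⁻ g, ENNReal.ofReal ‖a g * ⟪π g (S (π g⁻¹ u)), v⟫_ℂ‖ ∂μ
        ≤ ENNReal.ofReal (((1 / d) * M * ∑' i : ℕ, ‖f i‖ * ‖h i‖) * ‖u‖ * ‖v‖) := by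
      calc ∫⁻ g, ENNReal.ofReal ‖a g * ⟪π g (S (π g⁻¹ u)), v⟫_ℂ‖ ∂μ
          ≤ ∫⁻ g, ENNReal.ofReal M * ∑' i : ℕ,
              ENNReal.ofReal ‖⟪π g (h i), u⟫_ℂ‖ * ENNReal.ofReal ‖⟪π g (f i), v⟫_ℂ‖ ∂μ := by
            refine lintegral_mono fun g => ?_
            refine (ENNReal.ofReal_le_ofReal (hpt g u v)).trans (le_of_eq ?_)
            rw [ENNReal.ofReal_mul hM0,
              ENNReal.ofReal_tsum_of_nonneg (fun i => by positivity) (hsn g u v)]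
            congr 1
            exact tsum_congr fun i => ENNReal.ofReal_mul (norm_nonneg _)
        _ = ENNReal.ofReal M * ∑' i : ℕ, ∫⁻ g,
              ENNReal.ofReal ‖⟪π g (h i), u⟫_ℂ‖ * ENNReal.ofReal ‖⟪π g (f i), v⟫_ℂ‖ ∂μ := by
            rw [lintegral_const_mul' _ _ ENNReal.ofReal_ne_top,
              lintegral_tsum (f := fun i g => ENNReal.ofReal ‖⟪π g (h i), u⟫_ℂ‖ * ENNReal.ofReal ‖⟪π g (f i), v⟫_ℂ‖) fun i => (hmeas (h i) u).mul (hmeas (f i) v)]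
        _ ≤ ENNReal.ofReal M * ∑' i : ℕ,
              ENNReal.ofReal ((1 / d) * ‖u‖ * ‖v‖ * (‖f i‖ * ‖h i‖)) := by
            gcongr with i
            exact holder u v i
        _ = ENNReal.ofReal (((1 / d) * M * ∑' i : ℕ, ‖f i‖ * ‖h i‖) * ‖u‖ * ‖v‖) := by
            rw [← ENNReal.ofReal_tsum_of_nonneg (fun i => by positivity)
              (hsum.mul_left ((1 / d) * ‖u‖ * ‖v‖)), ← ENNReal.ofReal_mul hM0]
            congr 1
            rw [tsum_mul_left]
            ring
    have := ENNReal.toReal_le_of_le_ofReal (by positivity) big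
    exact this
  -- conclude the operator norm bound
  refine T.opNorm_le_bound (by positivity) fun u => ?_
  rcases eq_or_ne (T u) 0 with h0 | h0
  · rw [h0, norm_zero]; positivity
  · have h3 : ‖⟪T u, T u⟫_ℂ‖ = ‖T u‖ * ‖T u‖ := by
      rw [inner_self_eq_norm_sq_to_K]
      simp [Real.norm_of_nonneg (norm_nonneg (T u)), pow_two]
    have h1 : ‖T u‖ * ‖T u‖
        ≤ (((1 / d) * M * ∑' i : ℕ, ‖f i‖ * ‖h i‖) * ‖u‖) * ‖T u‖ := by
      have h2 := key u (T u)
      rw [h3] at h2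
      calc ‖T u‖ * ‖T u‖ ≤ ((1 / d) * M * ∑' i : ℕ, ‖f i‖ * ‖h i‖) * ‖u‖ * ‖T u‖ := h2
        _ = (((1 / d) * M * ∑' i : ℕ, ‖f i‖ * ‖h i‖) * ‖u‖) * ‖T u‖ := by ring
    exact le_of_mul_le_mul_right h1 (norm_pos_iff.mpr h0)
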